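/- arXiv:1805.03489 — 2 statements merged into one kernel-verified Lean document; each statement's English description precedes it below -/
import Mathlib

section
/- Let k be a field and α, β ∈ k nonzero. Let I be the two-sided ideal of the free algebra k⟨x, y, z⟩ generated by yx − αxy − x, zx − βxz − z, and zy − yz. Then the element (α − 1)·yz + z belongs to I. -/
noncomputable section

/-- The generators x, y, z of the free algebra k⟨x, y, z⟩. -/
abbrev Xv (k : Type*) [Field k] : FreeAlgebra k (Fin 3) := FreeAlgebra.ι k 0
abbrev Yv (k : Type*) [Field k] : FreeAlgebra k (Fin 3) := FreeAlgebra.ι k 1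
abbrev Zv (k : Type*) [Field k] : FreeAlgebra k (Fin 3) := FreeAlgebra.ι k 2

theorem stmt_8 {k : Type*} [Field k] (α β : k) (hα : α ≠ 0) (hβ : β ≠ 0) :
    (α - 1) • (Yv k * Zv k) + Zv k ∈
      TwoSidedIdeal.span
        {Yv k * Xv k - α • (Xv k * Yv k) - Xv k,
         Zv k * Xv k - β • (Xv k * Zv k) - Zv k,
         Zv k * Yv k - Yv k * Zv k} := by
  set x := Xv k
  set y := Yv k
  set z := Zv k
  set A := y * x - α • (x * y) - x with hAdef
  set B := z * x - β • (x * z) - z with hBdef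
  set C := z * y - y * z with hCdef
  set I := TwoSidedIdeal.span {A, B, C} with hI
  have hA : A ∈ I := TwoSidedIdeal.subset_span (by simp)
  have hB : B ∈ I := TwoSidedIdeal.subset_span (by simp)
  have hC : C ∈ I := TwoSidedIdeal.subset_span (by simp)
  have smul_mem : ∀ (c : k) (m : FreeAlgebra k (Fin 3)), m ∈ I → c • m ∈ I := by
    intro c m hm
    rw [Algebra.smul_def]
    exact I.mul_mem_left _ _ hm
  have key : (α - 1) • (y * z) + z =
      C * x + y * B + β • (A * z) - z * A - α • (B * y) - B - (α * β) • (x * C)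
        - α • C := by
    simp only [hAdef, hBdef, hCdef, mul_sub, sub_mul, mul_smul_comm, smul_mul_assoc,
      smul_smul, smul_sub, sub_smul, one_smul, mul_assoc]
    module
  rw [key]
  refine I.sub_mem (I.sub_mem (I.sub_mem (I.sub_mem (I.sub_mem (I.add_mem ?_ ?_) ?_) ?_) ?_) ?_) ?_
  · exact I.add_mem (I.mul_mem_right _ _ hC) (I.mul_mem_left _ _ hB)
  · exact smul_mem _ _ (I.mul_mem_right _ _ hA)
  · exact I.mul_mem_left _ _ hA
  · exact smul_mem _ _ (I.mul_mem_right _ _ hB)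
  · exact hB
  · exact smul_mem _ _ (I.mul_mem_left _ _ hC)
  · exact smul_mem _ _ hC
end
end

section
/- Let k be a field and β ∈ k nonzero. Let I be the two-sided ideal of the free algebra k⟨x, y, z⟩ generated by yx − xy − x, zx − βxz − z, and zy − yz (i.e., the case α = 1 of the previous example). Then z ∈ I, and hence the image of z in k⟨x, y, z⟩/I is zero. -/
noncomputable section

/-- The two-sided ideal generated by yx − xy − x, zx − βxz − z, zy − yz. -/
def exIdeal (k : Type*) [Field k] (β : k) : TwoSidedIdeal (FreeAlgebra k (Fin 3)) :=
  TwoSidedIdeal.span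
    {Yv k * Xv k - Xv k * Yv k - Xv k,
     Zv k * Xv k - β • (Xv k * Zv k) - Zv k,
     Zv k * Yv k - Yv k * Zv k}

theorem stmt_9 {k : Type*} [Field k] (β : k) (hβ : β ≠ 0) :
    Zv k ∈ exIdeal k β ∧ (exIdeal k β).ringCon.mk' (Zv k) = 0 := by
  set x := Xv k
  set y := Yv k
  set z := Zv k
  set r1 := y * x - x * y - x with hr1
  set r2 := z * x - β • (x * z) - z with hr2
  set r3 := z * y - y * z with hr3
  have h1 : r1 ∈ exIdeal k β := TwoSidedIdeal.subset_span (by left; rfl)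
  have h2 : r2 ∈ exIdeal k β := TwoSidedIdeal.subset_span (by right; left; rfl)
  have h3 : r3 ∈ exIdeal k β := TwoSidedIdeal.subset_span (by right; right; rfl)
  have key : z = -(z * r1 - r3 * x - y * r2 + r2 * y + r2 - β • (r1 * z) + β • (x * r3) + r3) := by
    rw [hr1, hr2, hr3]
    simp only [smul_sub, smul_smul, mul_smul_comm, smul_mul_assoc, sub_mul, mul_sub, mul_assoc]
    abel_nf
  have hz : z ∈ exIdeal k β := by
    rw [key]
    have m1 := TwoSidedIdeal.mul_mem_left _ z _ h1
    have m2 := TwoSidedIdeal.mul_mem_right _ _ x h3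
    have m3 := TwoSidedIdeal.mul_mem_left _ y _ h2
    have m4 := TwoSidedIdeal.mul_mem_right _ _ y h2
    have m5 : β • (r1 * z) ∈ exIdeal k β := by
      rw [Algebra.smul_def]
      exact TwoSidedIdeal.mul_mem_left _ _ _ (TwoSidedIdeal.mul_mem_right _ _ z h1)
    have m6 : β • (x * r3) ∈ exIdeal k β := by
      rw [Algebra.smul_def]
      exact TwoSidedIdeal.mul_mem_left _ _ _ (TwoSidedIdeal.mul_mem_left _ x _ h3)
    exact TwoSidedIdeal.neg_mem _ (TwoSidedIdeal.add_mem _ (TwoSidedIdeal.add_mem _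
      (TwoSidedIdeal.sub_mem _ (TwoSidedIdeal.add_mem _ (TwoSidedIdeal.add_mem _
      (TwoSidedIdeal.sub_mem _ (TwoSidedIdeal.sub_mem _ m1 m2) m3) m4) h2) m5) m6) h3)
  refine ⟨hz, ?_⟩
  have := (TwoSidedIdeal.mem_iff (exIdeal k β) z).mp hz
  calc (exIdeal k β).ringCon.mk' z = (exIdeal k β).ringCon.mk' 0 := Quotient.sound this
    _ = 0 := map_zero _
end
end
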